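/- In B_4, if β, β', β'' are strongly quasipositive braids (possibly trivial), then the braid σ_{1,2}^{−1} β σ_{3,4} β' σ_{1,3} β'' σ_{2,4} is quasipositive. -/

import Mathlib

/-- Relations for the braid group `Bₙ`: the generator `k : Fin (n-1)` represents `σ_{k+1}`,
and we impose `σ_i σ_j = σ_j σ_i` for `|i - j| > 1` and `σ_i σ_{i+1} σ_i = σ_{i+1} σ_i σ_{i+1}`. -/
def braidRels (n : ℕ) : Set (FreeGroup (Fin (n - 1))) :=
  {r | ∃ i j : Fin (n - 1), (i : ℕ) + 1 < (j : ℕ) ∧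
      r = FreeGroup.of i * FreeGroup.of j * (FreeGroup.of i)⁻¹ * (FreeGroup.of j)⁻¹} ∪
  {r | ∃ i j : Fin (n - 1), (j : ℕ) = (i : ℕ) + 1 ∧
      r = FreeGroup.of i * FreeGroup.of j * FreeGroup.of i *
          (FreeGroup.of j * FreeGroup.of i * FreeGroup.of j)⁻¹}

/-- The braid group on `n` strands, presented with generators `σ_1, …, σ_{n-1}`. -/
abbrev BraidGroup (n : ℕ) : Type := PresentedGroup (braidRels n)

/-- The standard generator `σ_i` of `Bₙ`, for `1 ≤ i ≤ n - 1` (junk value `1` otherwise). -/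
def sigma (n i : ℕ) : BraidGroup n :=
  if h : 1 ≤ i ∧ i ≤ n - 1 then PresentedGroup.of ⟨i - 1, by omega⟩ else 1

/-- The word `σ_{j-1} σ_{j-2} ⋯ σ_{i+1}`. -/
def bandConj (n i j : ℕ) : BraidGroup n :=
  ((List.range (j - 1 - i)).map fun t => sigma n (j - 1 - t)).prod

/-- The band generator `σ_{i,j} = (σ_{j-1} σ_{j-2} ⋯ σ_{i+1}) σ_i (σ_{j-1} σ_{j-2} ⋯ σ_{i+1})⁻¹`.
In particular `σ_{i,i+1} = σ_i`. -/
def band (n i j : ℕ) : BraidGroup n :=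
  bandConj n i j * sigma n i * (bandConj n i j)⁻¹

/-- The set of band generators `σ_{i,j}`, `1 ≤ i < j ≤ n`, of `Bₙ`. -/
def bandGens (n : ℕ) : Set (BraidGroup n) :=
  {x | ∃ i j : ℕ, 1 ≤ i ∧ i < j ∧ j ≤ n ∧ x = band n i j}

/-- A braid is strongly quasipositive if it is a product of band generators, i.e. lies in the
submonoid generated by the `σ_{i,j}`, `1 ≤ i < j ≤ n`. -/
def StronglyQuasipositive (n : ℕ) (x : BraidGroup n) : Prop :=
  x ∈ Submonoid.closure (bandGens n)

/-- A braid is quasipositive if it lies in the submonoid generated by all conjugates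
`α σ_k α⁻¹` of the standard generators. -/
def Quasipositive (n : ℕ) (x : BraidGroup n) : Prop :=
  x ∈ Submonoid.closure
    {x : BraidGroup n | ∃ (α : BraidGroup n) (k : ℕ), 1 ≤ k ∧ k ≤ n - 1 ∧ x = α * sigma n k * α⁻¹}

lemma rel_one {n : ℕ} {r : FreeGroup (Fin (n-1))} (h : r ∈ braidRels n) :
    PresentedGroup.mk (braidRels n) r = 1 :=
  (QuotientGroup.eq_one_iff r).mpr (Subgroup.subset_normalClosure h)

open scoped commutatorElement in
lemma braid_comm {n : ℕ} (i j : Fin (n-1)) (h : (i:ℕ)+1 < (j:ℕ)) :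
    (PresentedGroup.of i : BraidGroup n) * PresentedGroup.of j =
      PresentedGroup.of j * PresentedGroup.of i := by
  have hm : (FreeGroup.of i * FreeGroup.of j * (FreeGroup.of i)⁻¹ * (FreeGroup.of j)⁻¹)
      ∈ braidRels n := Or.inl ⟨i, j, h, rfl⟩
  have h1 := rel_one hm
  simp only [map_mul, map_inv] at h1
  have : ⁅(PresentedGroup.of i : BraidGroup n), (PresentedGroup.of j : BraidGroup n)⁆ = 1 := by
    rw [commutatorElement_def]; exact h1
  exact (commutatorElement_eq_one_iff_mul_comm.mp this)

lemma braid_rel {n : ℕ} (i j : Fin (n-1)) (h : (j:ℕ) = (i:ℕ)+1) :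
    (PresentedGroup.of i : BraidGroup n) * PresentedGroup.of j * PresentedGroup.of i =
      PresentedGroup.of j * PresentedGroup.of i * PresentedGroup.of j := by
  have hm : (FreeGroup.of i * FreeGroup.of j * FreeGroup.of i *
      (FreeGroup.of j * FreeGroup.of i * FreeGroup.of j)⁻¹) ∈ braidRels n :=
    Or.inr ⟨i, j, h, rfl⟩
  have h1 := rel_one hm
  simp only [map_mul, map_inv] at h1
  rw [mul_inv_eq_one] at h1
  exact h1

lemma qp_mul {n : ℕ} {x y : BraidGroup n} (hx : Quasipositive n x)
    (hy : Quasipositive n y) : Quasipositive n (x * y) := Submonoid.mul_mem _ hx hy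

lemma qp_conj {n : ℕ} (g : BraidGroup n) {x : BraidGroup n} (hx : Quasipositive n x) :
    Quasipositive n (g * x * g⁻¹) := by
  unfold Quasipositive at *
  induction hx using Submonoid.closure_induction with
  | one => simpa using Submonoid.one_mem _
  | mul x y _ _ hx hy =>
      have e : g * (x * y) * g⁻¹ = (g * x * g⁻¹) * (g * y * g⁻¹) := by group
      rw [e]; exact Submonoid.mul_mem _ hx hy
  | mem x hx =>
      obtain ⟨α, k, h1, h2, rfl⟩ := hx
      exact Submonoid.subset_closure ⟨g * α, k, h1, h2, by group⟩

lemma sqp_qp {n : ℕ} {x : BraidGroup n} (hx : StronglyQuasipositive n x) :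
    Quasipositive n x := by
  refine Submonoid.closure_mono ?_ hx
  rintro y ⟨i, j, h1, h2, h3, rfl⟩
  exact ⟨bandConj n i j, i, h1, by omega, rfl⟩

lemma band_qp {n i j : ℕ} (h1 : 1 ≤ i) (h2 : i < j) (h3 : j ≤ n) :
    Quasipositive n (band n i j) :=
  Submonoid.subset_closure ⟨bandConj n i j, i, h1, by omega, rfl⟩

/-- In `B₄`, for strongly quasipositive `β, β', β''`, the braid
`σ_{1,2}⁻¹ β σ_{3,4} β' σ_{1,3} β'' σ_{2,4}` is quasipositive. -/
theorem claim_R_case1 (β β' β'' : BraidGroup 4)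
    (hβ : StronglyQuasipositive 4 β) (hβ' : StronglyQuasipositive 4 β')
    (hβ'' : StronglyQuasipositive 4 β'') :
    Quasipositive 4
      ((band 4 1 2)⁻¹ * β * band 4 3 4 * β' * band 4 1 3 * β'' * band 4 2 4) := by
  set a := sigma 4 1 with ha
  set b := sigma 4 2 with hb
  set c := sigma 4 3 with hc
  have e12 : band 4 1 2 = a := by simp [band, bandConj, ha]
  have e34 : band 4 3 4 = c := by simp [band, bandConj, hc]
  have e13 : band 4 1 3 = b * a * b⁻¹ := by simp [band, bandConj, List.range_succ, ha, hb]
  have e24 : band 4 2 4 = c * b * c⁻¹ := by simp [band, bandConj, List.range_succ, hb, hc]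
  have ea : a = PresentedGroup.of (⟨0, by omega⟩ : Fin (4-1)) := by simp [ha, sigma]
  have eb : b = PresentedGroup.of (⟨1, by omega⟩ : Fin (4-1)) := by simp [hb, sigma]
  have ec : c = PresentedGroup.of (⟨2, by omega⟩ : Fin (4-1)) := by simp [hc, sigma]
  have hac : a * c = c * a := by rw [ea, ec]; exact braid_comm _ _ (by norm_num)
  have hab : a * b * a = b * a * b := by rw [ea, eb]; exact braid_rel _ _ (by norm_num)
  have hbc : b * c * b = c * b * c := by rw [eb, ec]; exact braid_rel _ _ (by norm_num)
  have h1 : a * b * a * b⁻¹ * b⁻¹ = b * a * b⁻¹ := by rw [hab]; group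
  have h2 : b * c * b * c⁻¹ * c⁻¹ = c * b * c⁻¹ := by rw [hbc]; group
  have hcom : Commute a c := hac
  have h3 : c * a⁻¹ * c⁻¹ = a⁻¹ := by
    rw [hcom.symm.inv_right.eq]; group
  have key : (band 4 1 2)⁻¹ * β * band 4 3 4 * β' * band 4 1 3 * β'' * band 4 2 4 =
      c * ((a⁻¹ * (c⁻¹ * β * c * β') * a) *
        ((b * a * b⁻¹) * ((b⁻¹ * β'' * b) * (c * b * c⁻¹)))) * c⁻¹ := by
    rw [e12, e34, e13, e24]
    calc a⁻¹ * β * c * β' * (b * a * b⁻¹) * β'' * (c * b * c⁻¹)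
        = a⁻¹ * β * c * β' * (a * b * a * b⁻¹ * b⁻¹) * β'' * (b * c * b * c⁻¹ * c⁻¹) * 1 := by
          rw [h1, h2]; group
      _ = (c * a⁻¹ * c⁻¹) * β * c * β' * (a * b * a * b⁻¹ * b⁻¹) * β'' *
            (b * c * b * c⁻¹ * c⁻¹) * 1 := by rw [h3]
      _ = c * ((a⁻¹ * (c⁻¹ * β * c * β') * a) *
            ((b * a * b⁻¹) * ((b⁻¹ * β'' * b) * (c * b * c⁻¹)))) * c⁻¹ := by group
  rw [key]
  apply qp_conj
  apply qp_mul
  · have hX : Quasipositive 4 (c⁻¹ * β * c * β') := by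
      have hc1 := qp_conj c⁻¹ (sqp_qp hβ)
      rw [inv_inv] at hc1
      exact qp_mul hc1 (sqp_qp hβ')
    have := qp_conj a⁻¹ hX
    rwa [inv_inv] at this
  · apply qp_mul
    · rw [← e13]; exact band_qp (by norm_num) (by norm_num) (by norm_num)
    · apply qp_mul
      · exact qp_conj _ (sqp_qp hβ'')
      · rw [← e24]; exact band_qp (by norm_num) (by norm_num) (by norm_num)
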